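/- arXiv:math/9809012 — 2 statements merged into one kernel-verified Lean document; each statement's English description precedes it below -/
import Mathlib

section
/- (Lemma 4.2) Suppose condition (1.5) holds. Then ∫_ℝ |∂G(x,t)/∂x| dt = |u'(x)|·∫_{−∞}^x v(t) dt + v'(x)·∫_x^∞ u(t) dt → 0 as |x| → ∞. -/
open MeasureTheory Filter Real Set
open scoped ENNReal

noncomputable section

/-- Condition (1.5): for every `a > 0`, `∫_{x-a}^{x+a} q(t) dt → ∞` as `|x| → ∞`. -/
def Cond15 (q : ℝ → ℝ) : Prop :=
  ∀ a : ℝ, 0 < a → Tendsto (fun x => ∫ t in (x - a)..(x + a), q t) (cocompact ℝ) atTop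

/-- `(u, v)` is a principal fundamental system of solutions (PFSS) of `z'' = q z`.
Local absolute continuity of `u'` together with `u'' = q u` a.e. is encoded via the
fundamental theorem of calculus: `u' b - u' a = ∫_a^b q t * u t dt` for all `a, b`. -/
def IsPFSS (q u v : ℝ → ℝ) : Prop :=
  ContDiff ℝ 1 u ∧ ContDiff ℝ 1 v ∧
  (∀ a b : ℝ, deriv u b - deriv u a = ∫ t in a..b, q t * u t) ∧
  (∀ a b : ℝ, deriv v b - deriv v a = ∫ t in a..b, q t * v t) ∧
  (∀ x, 0 < u x) ∧ (∀ x, 0 < v x) ∧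
  (∀ x, deriv u x < 0) ∧ (∀ x, 0 < deriv v x) ∧
  (∀ x, deriv v x * u x - deriv u x * v x = 1) ∧
  (∀ x, u x = v x * ∫ t in Set.Ioi x, ((v t) ^ 2)⁻¹) ∧
  Tendsto u atTop (nhds 0) ∧ Tendsto (deriv u) atTop (nhds 0) ∧
  Tendsto v atTop atTop ∧ Tendsto (deriv v) atTop atTop ∧
  Tendsto v atBot (nhds 0) ∧ Tendsto (deriv v) atBot (nhds 0) ∧
  Tendsto u atBot atTop ∧ Tendsto (fun x => |deriv u x|) atBot atTop

/-- The Green function: `G(x,t) = u(x) v(t)` for `x ≥ t`, `G(x,t) = u(t) v(x)` for `x ≤ t`. -/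
def GreenFn (u v : ℝ → ℝ) (x t : ℝ) : ℝ := if x ≤ t then u t * v x else u x * v t

/-- The Green operator `(Gf)(x) = ∫_ℝ G(x,t) f(t) dt`. -/
def GreenOp (u v f : ℝ → ℝ) (x : ℝ) : ℝ := ∫ t, GreenFn u v x t * f t

section Aux

/-- `q * w` is interval-integrable for locally integrable `q` and continuous `w`. -/
private lemma qmul_intervalIntegrable {q w : ℝ → ℝ} (hq_loc : LocallyIntegrable q)
    (hw : Continuous w) (A B : ℝ) :
    IntervalIntegrable (fun s => q s * w s) volume A B := by
  rw [intervalIntegrable_iff]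
  exact ((hq_loc.integrableOn_isCompact isCompact_uIcc).mul_continuousOn
    hw.continuousOn isCompact_uIcc).mono_set Set.uIoc_subset_uIcc

private lemma q_intervalIntegrable {q : ℝ → ℝ} (hq_loc : LocallyIntegrable q) (A B : ℝ) :
    IntervalIntegrable q volume A B := by
  rw [intervalIntegrable_iff]
  exact (hq_loc.integrableOn_isCompact isCompact_uIcc).mono_set Set.uIoc_subset_uIcc

/-- If a positive decreasing function halves over every step of length `2a`,
then its integral over `[x,y]` is at most `4 a w x`. -/
private lemma int_le_of_decay {w : ℝ → ℝ} (hw : Continuous w) (hpos : ∀ t, 0 < w t)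
    (hanti : ∀ s t : ℝ, s ≤ t → w t ≤ w s) {a x y : ℝ} (ha : 0 < a)
    (hdec : ∀ t, x ≤ t → t + 2*a ≤ y → w (t + 2*a) ≤ w t / 2) :
    ∫ t in x..y, w t ≤ 4 * a * w x := by
  have hwx := hpos x
  rcases le_or_gt y x with hyx | hxy
  · have h0 : 0 ≤ ∫ t in y..x, w t :=
      intervalIntegral.integral_nonneg hyx fun t _ => (hpos t).le
    rw [intervalIntegral.integral_symm]
    nlinarith
  rcases le_or_gt y (x + 2*a) with hy2 | hy2
  · have h1 : ∫ t in x..y, w t ≤ ∫ t in x..y, w x :=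
      intervalIntegral.integral_mono_on hxy.le (hw.intervalIntegrable _ _)
        intervalIntegrable_const (fun t ht => hanti x t ht.1)
    rw [intervalIntegral.integral_const, smul_eq_mul] at h1
    nlinarith
  · have hi1 : IntervalIntegrable w volume x (x + 2*a) := hw.intervalIntegrable _ _
    have hi2 : IntervalIntegrable w volume (x + 2*a) y := hw.intervalIntegrable _ _
    have hsplit := intervalIntegral.integral_add_adjacent_intervals hi1 hi2
    have h1 : ∫ t in x..(x + 2*a), w t ≤ 2 * a * w x := by
      have h1' : ∫ t in x..(x + 2*a), w t ≤ ∫ t in x..(x + 2*a), w x :=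
        intervalIntegral.integral_mono_on (by linarith) (hw.intervalIntegrable _ _)
          intervalIntegrable_const (fun t ht => hanti x t ht.1)
      rw [intervalIntegral.integral_const, smul_eq_mul] at h1'
      nlinarith
    have h2 : (∫ t in x..(y - 2*a), w (t + 2*a)) = ∫ t in (x + 2*a)..y, w t := by
      rw [intervalIntegral.integral_comp_add_right w (2*a)]
      congr 1
      ring
    have h3 : (∫ t in x..(y - 2*a), w (t + 2*a)) ≤ ∫ t in x..(y - 2*a), w t / 2 := by
      refine intervalIntegral.integral_mono_on (by linarith)
        ((hw.comp (continuous_id.add continuous_const)).intervalIntegrable _ _)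
        ((hw.div_const 2).intervalIntegrable _ _) (fun t ht => hdec t ht.1 (by linarith [ht.2]))
    have h4 : (∫ t in x..(y - 2*a), w t / 2) = (∫ t in x..(y - 2*a), w t) / 2 := by
      simp
    have h5 : (∫ t in x..(y - 2*a), w t) ≤ ∫ t in x..y, w t := by
      have hadd := intervalIntegral.integral_add_adjacent_intervals
        (hw.intervalIntegrable (μ := volume) x (y - 2*a)) (hw.intervalIntegrable (μ := volume) (y - 2*a) y)
      have hnn : 0 ≤ ∫ t in (y - 2*a)..y, w t :=
        intervalIntegral.integral_nonneg (by linarith) fun t _ => (hpos t).le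
      linarith
    linarith

/-- Mirror image of `int_le_of_decay` for increasing functions decaying to the left. -/
private lemma int_le_of_decay_left {w : ℝ → ℝ} (hw : Continuous w) (hpos : ∀ t, 0 < w t)
    (hmono : ∀ s t : ℝ, s ≤ t → w s ≤ w t) {a c x : ℝ} (ha : 0 < a)
    (hdec : ∀ t, t ≤ x → c + 2*a ≤ t → w (t - 2*a) ≤ w t / 2) :
    ∫ t in c..x, w t ≤ 4 * a * w x := by
  have key : (∫ t in (-x)..(-c), w (-t)) ≤ 4 * a * w x := by
    have hdec' : ∀ t, -x ≤ t → t + 2*a ≤ -c → w (-(t + 2*a)) ≤ w (-t) / 2 := by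
      intro t h1 h2
      have h3 := hdec (-t) (by linarith) (by linarith)
      have e : -t - 2*a = -(t + 2*a) := by ring
      rwa [e] at h3
    have := int_le_of_decay (w := fun t => w (-t)) (hw.comp continuous_neg)
      (fun t => hpos _) (fun s t hst => hmono _ _ (by linarith)) (a := a) (x := -x) (y := -c)
      ha hdec'
    simpa using this
  rwa [intervalIntegral.integral_comp_neg, neg_neg, neg_neg] at key

/-- Step decay for `u`: if `∫_{t+a}^{t+2a} q ≥ 2/a`, then `u (t+2a) ≤ u t / 2`. -/
private lemma step_right {q u : ℝ → ℝ} (hq_loc : LocallyIntegrable q) (hq : ∀ x, 1 ≤ q x)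
    (huc : Continuous u) (hud : Differentiable ℝ u) (hu'c : Continuous (deriv u))
    (hFTC : ∀ A B : ℝ, deriv u B - deriv u A = ∫ t in A..B, q t * u t)
    (hupos : ∀ x, 0 < u x) (hu'neg : ∀ x, deriv u x < 0)
    (hanti : ∀ s t : ℝ, s ≤ t → u t ≤ u s) (hmono' : Monotone (deriv u))
    {a t : ℝ} (ha : 0 < a) (hQ : 2/a ≤ ∫ s in (t+a)..(t+2*a), q s) :
    u (t + 2*a) ≤ u t / 2 := by
  -- (i)  a * (-u'(t+a)) ≤ u t
  have hftc1 : (∫ s in t..(t+a), deriv u s) = u (t+a) - u t :=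
    intervalIntegral.integral_deriv_eq_sub (fun x _ => hud x) (hu'c.intervalIntegrable _ _)
  have hmon : ∫ s in t..(t+a), deriv u s ≤ ∫ s in t..(t+a), deriv u (t+a) :=
    intervalIntegral.integral_mono_on (by linarith) (hu'c.intervalIntegrable _ _)
      intervalIntegrable_const (fun s hs => hmono' hs.2)
  rw [intervalIntegral.integral_const, smul_eq_mul, hftc1] at hmon
  have hi : a * (- deriv u (t+a)) ≤ u t := by nlinarith [hupos (t+a)]
  -- (ii) (∫ q) * u(t+2a) ≤ -u'(t+a)
  have h2 : (∫ s in (t+a)..(t+2*a), q s) * u (t+2*a) ≤ ∫ s in (t+a)..(t+2*a), q s * u s := by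
    have hmm : ∫ s in (t+a)..(t+2*a), q s * u (t+2*a) ≤ ∫ s in (t+a)..(t+2*a), q s * u s :=
      intervalIntegral.integral_mono_on (by linarith)
        ((q_intervalIntegrable hq_loc _ _).mul_const _)
        (qmul_intervalIntegrable hq_loc huc _ _)
        (fun s hs => mul_le_mul_of_nonneg_left (hanti s (t+2*a) hs.2)
          (le_trans zero_le_one (hq s)))
    rwa [intervalIntegral.integral_mul_const] at hmm
  have h3 : (∫ s in (t+a)..(t+2*a), q s * u s) ≤ - deriv u (t+a) := by
    have hf := hFTC (t+a) (t+2*a)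
    have hn := hu'neg (t+2*a)
    linarith
  have hu2 := hupos (t+2*a)
  have hkey : (2/a) * u (t+2*a) ≤ u t / a := by
    have hc : (2/a) * u (t+2*a) ≤ (∫ s in (t+a)..(t+2*a), q s) * u (t+2*a) :=
      mul_le_mul_of_nonneg_right hQ hu2.le
    have hd : - deriv u (t+a) ≤ u t / a := by
      rw [le_div_iff₀ ha]
      nlinarith [hi]
    linarith [le_trans hc (le_trans h2 h3)]
  have := mul_le_mul_of_nonneg_left hkey ha.le
  have e1 : a * ((2/a) * u (t+2*a)) = 2 * u (t+2*a) := by field_simp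
  have e2 : a * (u t / a) = u t := by field_simp
  rw [e1, e2] at this
  linarith

/-- Step decay for `v`: if `∫_{t-2a}^{t-a} q ≥ 2/a`, then `v (t-2a) ≤ v t / 2`. -/
private lemma step_left {q v : ℝ → ℝ} (hq_loc : LocallyIntegrable q) (hq : ∀ x, 1 ≤ q x)
    (hvc : Continuous v) (hvd : Differentiable ℝ v) (hv'c : Continuous (deriv v))
    (hFTC : ∀ A B : ℝ, deriv v B - deriv v A = ∫ t in A..B, q t * v t)
    (hvpos : ∀ x, 0 < v x) (hv'pos : ∀ x, 0 < deriv v x)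
    (hmono : ∀ s t : ℝ, s ≤ t → v s ≤ v t) (hmono' : Monotone (deriv v))
    {a t : ℝ} (ha : 0 < a) (hQ : 2/a ≤ ∫ s in (t-2*a)..(t-a), q s) :
    v (t - 2*a) ≤ v t / 2 := by
  -- (i)  a * v'(t-a) ≤ v t
  have hftc1 : (∫ s in (t-a)..t, deriv v s) = v t - v (t-a) :=
    intervalIntegral.integral_deriv_eq_sub (fun x _ => hvd x) (hv'c.intervalIntegrable _ _)
  have hmon : ∫ s in (t-a)..t, deriv v (t-a) ≤ ∫ s in (t-a)..t, deriv v s :=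
    intervalIntegral.integral_mono_on (by linarith) intervalIntegrable_const
      (hv'c.intervalIntegrable _ _) (fun s hs => hmono' hs.1)
  rw [intervalIntegral.integral_const, smul_eq_mul, hftc1] at hmon
  have hi : a * deriv v (t-a) ≤ v t := by nlinarith [hvpos (t-a)]
  -- (ii) (∫ q) * v(t-2a) ≤ v'(t-a)
  have h2 : (∫ s in (t-2*a)..(t-a), q s) * v (t-2*a) ≤ ∫ s in (t-2*a)..(t-a), q s * v s := by
    have hmm : ∫ s in (t-2*a)..(t-a), q s * v (t-2*a) ≤ ∫ s in (t-2*a)..(t-a), q s * v s :=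
      intervalIntegral.integral_mono_on (by linarith)
        ((q_intervalIntegrable hq_loc _ _).mul_const _)
        (qmul_intervalIntegrable hq_loc hvc _ _)
        (fun s hs => mul_le_mul_of_nonneg_left (hmono (t-2*a) s hs.1)
          (le_trans zero_le_one (hq s)))
    rwa [intervalIntegral.integral_mul_const] at hmm
  have h3 : (∫ s in (t-2*a)..(t-a), q s * v s) ≤ deriv v (t-a) := by
    have hf := hFTC (t-2*a) (t-a)
    have hn := hv'pos (t-2*a)
    linarith
  have hv2 := hvpos (t-2*a)
  have hkey : (2/a) * v (t-2*a) ≤ v t / a := by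
    have hc : (2/a) * v (t-2*a) ≤ (∫ s in (t-2*a)..(t-a), q s) * v (t-2*a) :=
      mul_le_mul_of_nonneg_right hQ hv2.le
    have hd : deriv v (t-a) ≤ v t / a := by
      rw [le_div_iff₀ ha]
      nlinarith [hi]
    linarith [le_trans hc (le_trans h2 h3)]
  have := mul_le_mul_of_nonneg_left hkey ha.le
  have e1 : a * ((2/a) * v (t-2*a)) = 2 * v (t-2*a) := by field_simp
  have e2 : a * (v t / a) = v t := by field_simp
  rw [e1, e2] at this
  linarith

end Aux

/-- Lemma 4.2: under condition (1.5),
`∫_ℝ |∂G(x,t)/∂x| dt = |u'(x)| ∫_{-∞}^x v + v'(x) ∫_x^∞ u → 0` as `|x| → ∞`. -/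
theorem lemma_4_2 (q u v : ℝ → ℝ) (hq_loc : LocallyIntegrable q) (hq : ∀ x, 1 ≤ q x)
    (huv : IsPFSS q u v) (h15 : Cond15 q) :
    Tendsto (fun x : ℝ =>
        |deriv u x| * (∫ t in Set.Iic x, v t) + deriv v x * (∫ t in Set.Ioi x, u t))
      (cocompact ℝ) (nhds 0) := by
  obtain ⟨hu1, hv1, hfu, hfv, hupos, hvpos, hu'neg, hv'pos, hW, -,
    hu0, hu'0, hvtop, hv'top, hv0, hv'0, hubot, hu'bot⟩ := huv
  have hud : Differentiable ℝ u := hu1.differentiable one_ne_zero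
  have hvd : Differentiable ℝ v := hv1.differentiable one_ne_zero
  have huc : Continuous u := hud.continuous
  have hvc : Continuous v := hvd.continuous
  have hu'c : Continuous (deriv u) := hu1.continuous_deriv le_rfl
  have hv'c : Continuous (deriv v) := hv1.continuous_deriv le_rfl
  have huanti : ∀ s t : ℝ, s ≤ t → u t ≤ u s := fun s t hst =>
    antitone_of_deriv_nonpos hud (fun x => (hu'neg x).le) hst
  have hvmono : ∀ s t : ℝ, s ≤ t → v s ≤ v t := fun s t hst =>
    monotone_of_deriv_nonneg hvd (fun x => (hv'pos x).le) hst
  have hu'mono : Monotone (deriv u) := by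
    intro A B hAB
    have h := hfu A B
    have h0 : 0 ≤ ∫ t in A..B, q t * u t :=
      intervalIntegral.integral_nonneg hAB
        (fun s _ => mul_nonneg (le_trans zero_le_one (hq s)) (hupos s).le)
    linarith
  have hv'mono : Monotone (deriv v) := by
    intro A B hAB
    have h := hfv A B
    have h0 : 0 ≤ ∫ t in A..B, q t * v t :=
      intervalIntegral.integral_nonneg hAB
        (fun s _ => mul_nonneg (le_trans zero_le_one (hq s)) (hvpos s).le)
    linarith
  -- Wronskian bounds
  have hbW1 : ∀ x, u x * deriv v x ≤ 1 := fun x => by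
    nlinarith [hW x, hupos x, hvpos x, hu'neg x]
  have hbW2 : ∀ x, (- deriv u x) * v x ≤ 1 := fun x => by
    nlinarith [hW x, hupos x, hvpos x, hv'pos x]
  -- Interval bounds for integrability
  have hbndu : ∀ x y : ℝ, x ≤ y → (∫ s in x..y, u s) ≤ - deriv u x := by
    intro x y hxy
    have h1 : (∫ s in x..y, u s) ≤ ∫ s in x..y, q s * u s :=
      intervalIntegral.integral_mono_on hxy (huc.intervalIntegrable _ _)
        (qmul_intervalIntegrable hq_loc huc _ _)
        (fun s _ => by nlinarith [hq s, hupos s])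
    have h2 := hfu x y
    have h3 := hu'neg y
    linarith
  have hbndv : ∀ y x : ℝ, y ≤ x → (∫ s in y..x, v s) ≤ deriv v x := by
    intro y x hyx
    have h1 : (∫ s in y..x, v s) ≤ ∫ s in y..x, q s * v s :=
      intervalIntegral.integral_mono_on hyx (hvc.intervalIntegrable _ _)
        (qmul_intervalIntegrable hq_loc hvc _ _)
        (fun s _ => by nlinarith [hq s, hvpos s])
    have h2 := hfv y x
    have h3 := hv'pos y
    linarith
  -- Integrability on half-lines
  have huIoi : ∀ x : ℝ, IntegrableOn u (Ioi x) := by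
    intro x
    refine integrableOn_Ioi_of_intervalIntegral_norm_bounded (- deriv u x) x
      (fun y : ℝ => (huc.integrableOn_Icc.mono_set Ioc_subset_Icc_self)) tendsto_id ?_
    filter_upwards [eventually_ge_atTop x] with y hxy
    have he : (∫ s in x..y, ‖u s‖) = ∫ s in x..y, u s :=
      intervalIntegral.integral_congr (fun s _ => by
        simp [Real.norm_eq_abs, abs_of_pos (hupos s)])
    simp only [id_eq]
    rw [he]
    exact hbndu x y hxy
  have hvIic : ∀ x : ℝ, IntegrableOn v (Iic x) := by
    intro x
    refine integrableOn_Iic_of_intervalIntegral_norm_bounded (deriv v x) x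
      (fun y : ℝ => (hvc.integrableOn_Icc.mono_set Ioc_subset_Icc_self)) tendsto_id ?_
    filter_upwards [eventually_le_atBot x] with y hyx
    have he : (∫ s in y..x, ‖v s‖) = ∫ s in y..x, v s :=
      intervalIntegral.integral_congr (fun s _ => by
        simp [Real.norm_eq_abs, abs_of_pos (hvpos s)])
    simp only [id_eq]
    rw [he]
    exact hbndv y x hyx
  have hIicv_nonneg : ∀ x : ℝ, 0 ≤ ∫ t in Iic x, v t := fun x =>
    setIntegral_nonneg measurableSet_Iic fun t _ => (hvpos t).le
  have hIoiu_nonneg : ∀ x : ℝ, 0 ≤ ∫ t in Ioi x, u t := fun x =>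
    setIntegral_nonneg measurableSet_Ioi fun t _ => (hupos t).le
  -- window bound from Cond15
  have hwindow : ∀ a : ℝ, 0 < a → ∃ R : ℝ, 0 ≤ R ∧
      ∀ y : ℝ, R ≤ |y| → 2/a ≤ ∫ s in (y - a/2)..(y + a/2), q s := by
    intro a ha
    have h := (h15 (a/2) (by positivity)).eventually (eventually_ge_atTop (2/a))
    rw [cocompact_eq_atBot_atTop, eventually_sup, eventually_atBot, eventually_atTop] at h
    obtain ⟨⟨R1, h1⟩, ⟨R2, h2⟩⟩ := h
    refine ⟨max 0 (max (-R1) R2), le_max_left _ _, ?_⟩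
    intro y hy
    have hR1 : -R1 ≤ max 0 (max (-R1) R2) := le_trans (le_max_left _ _) (le_max_right _ _)
    have hR2 : R2 ≤ max 0 (max (-R1) R2) := le_trans (le_max_right _ _) (le_max_right _ _)
    rcases le_or_gt 0 y with h0 | h0
    · rw [abs_of_nonneg h0] at hy
      exact h2 y (by linarith)
    · rw [abs_of_neg h0] at hy
      exact h1 y (by linarith)
  -- step decay lemmas specialized
  have hstepu : ∀ a R : ℝ, 0 < a →
      (∀ y : ℝ, R ≤ |y| → 2/a ≤ ∫ s in (y - a/2)..(y + a/2), q s) →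
      ∀ t : ℝ, R ≤ |t + 3*a/2| → u (t + 2*a) ≤ u t / 2 := by
    intro a R ha hQ t ht
    have h := hQ (t + 3*a/2) ht
    have e1 : t + 3*a/2 - a/2 = t + a := by ring
    have e2 : t + 3*a/2 + a/2 = t + 2*a := by ring
    rw [e1, e2] at h
    exact step_right hq_loc hq huc hud hu'c hfu hupos hu'neg huanti hu'mono ha h
  have hstepv : ∀ a R : ℝ, 0 < a →
      (∀ y : ℝ, R ≤ |y| → 2/a ≤ ∫ s in (y - a/2)..(y + a/2), q s) →
      ∀ t : ℝ, R ≤ |t - 3*a/2| → v (t - 2*a) ≤ v t / 2 := by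
    intro a R ha hQ t ht
    have h := hQ (t - 3*a/2) ht
    have e1 : t - 3*a/2 - a/2 = t - 2*a := by ring
    have e2 : t - 3*a/2 + a/2 = t - a := by ring
    rw [e1, e2] at h
    exact step_left hq_loc hq hvc hvd hv'c hfv hvpos hv'pos hvmono hv'mono ha h
  -- main splitting
  rw [show (cocompact ℝ) = atBot ⊔ atTop from cocompact_eq_atBot_atTop, tendsto_sup]
  constructor
  · -- x → -∞
    rw [NormedAddCommGroup.tendsto_nhds_zero]
    intro ε hε
    set a : ℝ := ε/32 with hadef
    have ha : 0 < a := by positivity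
    obtain ⟨R, hR0, hQ⟩ := hwindow a ha
    set x1 : ℝ := -(R + 4*a) with hx1def
    set C1 : ℝ := ∫ t in Ioi x1, u t with hC1def
    have hC1 : 0 ≤ C1 := hIoiu_nonneg x1
    have hv'small : ∀ᶠ x in atBot, deriv v x < ε/(2*(C1+1)) :=
      hv'0.eventually_lt_const (by positivity)
    filter_upwards [eventually_le_atBot x1, hv'small] with x hx hxs
    have hnn : 0 ≤ |deriv u x| * (∫ t in Iic x, v t) + deriv v x * (∫ t in Ioi x, u t) :=
      add_nonneg (mul_nonneg (abs_nonneg _) (hIicv_nonneg x))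
        (mul_nonneg (hv'pos x).le (hIoiu_nonneg x))
    rw [Real.norm_eq_abs, abs_of_nonneg hnn]
    -- A-bound:  |u' x| * ∫_{Iic x} v ≤ 4 a
    have hIic_le : (∫ t in Iic x, v t) ≤ 4*a*(v x) := by
      refine le_of_tendsto (intervalIntegral_tendsto_integral_Iic x (hvIic x) tendsto_id) ?_
      filter_upwards [eventually_le_atBot x] with y hy
      refine int_le_of_decay_left hvc hvpos hvmono ha ?_
      intro t ht1 _
      refine hstepv a R ha hQ t ?_
      have : R ≤ -(t - 3*a/2) := by
        have : t ≤ x1 := le_trans ht1 hx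
        rw [hx1def] at this
        linarith
      linarith [neg_le_abs (t - 3*a/2)]
    have hA : |deriv u x| * (∫ t in Iic x, v t) ≤ 4*a := by
      rw [abs_of_neg (hu'neg x)]
      have hdu : 0 ≤ -deriv u x := by linarith [hu'neg x]
      nlinarith [hbW2 x, mul_le_mul_of_nonneg_left hIic_le hdu]
    -- F-bound
    have hxx1 : x ≤ x1 := hx
    have hsplit : (∫ t in Ioi x, u t) = (∫ t in x..x1, u t) + C1 := by
      rw [← Set.Ioc_union_Ioi_eq_Ioi hxx1,
        setIntegral_union (Set.Ioc_disjoint_Ioi le_rfl) measurableSet_Ioi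
          ((huIoi x).mono_set Set.Ioc_subset_Ioi_self) (huIoi x1),
        intervalIntegral.integral_of_le hxx1]
    have hInt_le : (∫ t in x..x1, u t) ≤ 4*a*(u x) := by
      refine int_le_of_decay huc hupos huanti ha ?_
      intro t _ ht2
      refine hstepu a R ha hQ t ?_
      have : R ≤ -(t + 3*a/2) := by
        rw [hx1def] at ht2
        linarith
      linarith [neg_le_abs (t + 3*a/2)]
    have hF : deriv v x * (∫ t in Ioi x, u t) ≤ 4*a + deriv v x * C1 := by
      rw [hsplit, mul_add]
      have := mul_le_mul_of_nonneg_left hInt_le (hv'pos x).le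
      nlinarith [hbW1 x, hv'pos x]
    have hvC1 : deriv v x * C1 < ε/2 := by
      have h1 : deriv v x * C1 ≤ deriv v x * (C1 + 1) :=
        mul_le_mul_of_nonneg_left (by linarith) (hv'pos x).le
      have h2 : deriv v x * (C1 + 1) < (ε/(2*(C1+1))) * (C1 + 1) :=
        mul_lt_mul_of_pos_right hxs (by linarith)
      have h3 : (ε/(2*(C1+1))) * (C1 + 1) = ε/2 := by field_simp
      linarith
    have : 4*a + (4*a + deriv v x * C1) < ε := by
      rw [hadef] at *
      linarith
    linarith
  · -- x → +∞
    rw [NormedAddCommGroup.tendsto_nhds_zero]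
    intro ε hε
    set a : ℝ := ε/32 with hadef
    have ha : 0 < a := by positivity
    obtain ⟨R, hR0, hQ⟩ := hwindow a ha
    set x0 : ℝ := R + 4*a with hx0def
    set C0 : ℝ := ∫ t in Iic x0, v t with hC0def
    have hC0 : 0 ≤ C0 := hIicv_nonneg x0
    have hu'small : ∀ᶠ x in atTop, |deriv u x| < ε/(2*(C0+1)) := by
      have habs : Tendsto (fun x => |deriv u x|) atTop (nhds 0) := by
        have := hu'0.abs
        simpa using this
      exact habs.eventually_lt_const (by positivity)
    filter_upwards [eventually_ge_atTop x0, hu'small] with x hx hxs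
    have hnn : 0 ≤ |deriv u x| * (∫ t in Iic x, v t) + deriv v x * (∫ t in Ioi x, u t) :=
      add_nonneg (mul_nonneg (abs_nonneg _) (hIicv_nonneg x))
        (mul_nonneg (hv'pos x).le (hIoiu_nonneg x))
    rw [Real.norm_eq_abs, abs_of_nonneg hnn]
    -- F-bound:  v' x * ∫_{Ioi x} u ≤ 4 a
    have hIoi_le : (∫ t in Ioi x, u t) ≤ 4*a*(u x) := by
      refine le_of_tendsto (intervalIntegral_tendsto_integral_Ioi x (huIoi x) tendsto_id) ?_
      filter_upwards [eventually_ge_atTop x] with y hy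
      refine int_le_of_decay huc hupos huanti ha ?_
      intro t ht1 _
      refine hstepu a R ha hQ t ?_
      have : R ≤ t + 3*a/2 := by
        have : x0 ≤ t := le_trans hx ht1
        rw [hx0def] at this
        linarith
      linarith [le_abs_self (t + 3*a/2)]
    have hF : deriv v x * (∫ t in Ioi x, u t) ≤ 4*a := by
      have := mul_le_mul_of_nonneg_left hIoi_le (hv'pos x).le
      nlinarith [hbW1 x, hv'pos x]
    -- A-bound
    have hsplitI : (∫ t in Iic x, v t) = C0 + ∫ t in x0..x, v t := by
      have h := intervalIntegral.integral_Iic_sub_Iic (hvIic x0) (hvIic x)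
      rw [hC0def]
      linarith
    have hK : (∫ t in x0..x, v t) ≤ 4*a*(v x) := by
      refine int_le_of_decay_left hvc hvpos hvmono ha ?_
      intro t _ ht2
      refine hstepv a R ha hQ t ?_
      have : R ≤ t - 3*a/2 := by
        rw [hx0def] at ht2
        linarith
      linarith [le_abs_self (t - 3*a/2)]
    have hA : |deriv u x| * (∫ t in Iic x, v t) ≤ |deriv u x| * C0 + 4*a := by
      rw [hsplitI, mul_add, abs_of_neg (hu'neg x)]
      have hdu : 0 ≤ -deriv u x := by linarith [hu'neg x]
      nlinarith [hbW2 x, mul_le_mul_of_nonneg_left hK hdu]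
    have hAC0 : |deriv u x| * C0 < ε/2 := by
      have h1 : |deriv u x| * C0 ≤ |deriv u x| * (C0 + 1) :=
        mul_le_mul_of_nonneg_left (by linarith) (abs_nonneg _)
      have h2 : |deriv u x| * (C0 + 1) < (ε/(2*(C0+1))) * (C0 + 1) :=
        mul_lt_mul_of_pos_right hxs (by linarith)
      have h3 : (ε/(2*(C0+1))) * (C0 + 1) = ε/2 := by field_simp
      linarith
    have : |deriv u x| * C0 + 4*a + 4*a < ε := by
      rw [hadef] at *
      linarith
    linarith
end
end

section
/- (Lemmas 5.1 and 5.2) There exists an absolute constant c > 0 such that for every x ∈ ℝ and every t ∈ [x − d(x)/2, x + d(x)/2]: c^{−1}·v(x) ≤ v(t) ≤ c·v(x) and c^{−1}·u(x) ≤ u(t) ≤ c·u(x); moreover, if f_x denotes the characteristic function of the segment Δ(x) = [x − d(x)/2, x + d(x)/2], then (G f_x)(t) ≥ c^{−1}·d(x)² for every t ∈ Δ(x). -/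
open MeasureTheory Filter Real Set
open scoped ENNReal

noncomputable section

private lemma aux_q_ii {q : ℝ → ℝ} (hq_loc : LocallyIntegrable q) (a b : ℝ) :
    IntervalIntegrable q volume a b :=
  (hq_loc.integrableOn_isCompact isCompact_uIcc).intervalIntegrable

private lemma aux_qmul_ii {q w : ℝ → ℝ} (hq_loc : LocallyIntegrable q) (hq : ∀ x, 1 ≤ q x)
    (hw : Continuous w) (a b : ℝ) :
    IntervalIntegrable (fun t => q t * w t) volume a b := by
  obtain ⟨M, hM⟩ := isCompact_uIcc.exists_bound_of_continuousOn (hw.continuousOn (s := Set.uIcc a b))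
  refine ((aux_q_ii hq_loc a b).mul_const M).mono_fun
    (hq_loc.aestronglyMeasurable.restrict.mul hw.aestronglyMeasurable.restrict) ?_
  refine ae_restrict_of_forall_mem measurableSet_uIoc fun t ht => ?_
  have hqt : (0:ℝ) ≤ q t := zero_le_one.trans (hq t)
  have hMt : ‖w t‖ ≤ M := hM t (Set.uIoc_subset_uIcc ht)
  calc ‖q t * w t‖ = q t * ‖w t‖ := by
        rw [norm_mul, Real.norm_of_nonneg hqt]
    _ ≤ q t * M := by
        exact mul_le_mul_of_nonneg_left hMt hqt
    _ ≤ ‖q t * M‖ := le_abs_self _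

private lemma aux_q_sub {q : ℝ → ℝ} (hq_loc : LocallyIntegrable q) (hq : ∀ x, 1 ≤ q x)
    {A B c1 c2 : ℝ} (h1 : A ≤ c1) (h12 : c1 ≤ c2) (h2 : c2 ≤ B) :
    ∫ t in c1..c2, q t ≤ ∫ t in A..B, q t :=
  intervalIntegral.integral_mono_interval h1 h12 h2
    (Filter.Eventually.of_forall fun t => zero_le_one.trans (hq t))
    (aux_q_ii hq_loc A B)

private lemma aux_deriv_mono {q w : ℝ → ℝ} (hq : ∀ x, 1 ≤ q x) (hpos : ∀ x, 0 < w x)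
    (hftc : ∀ a b : ℝ, deriv w b - deriv w a = ∫ t in a..b, q t * w t) :
    Monotone (deriv w) := by
  intro a b hab
  have h0 : 0 ≤ ∫ t in a..b, q t * w t :=
    intervalIntegral.integral_nonneg hab fun t _ =>
      mul_nonneg (zero_le_one.trans (hq t)) (hpos t).le
  have := hftc a b; linarith

private lemma aux_v_deriv_bound {q v : ℝ → ℝ} (hq_loc : LocallyIntegrable q) (hq : ∀ x, 1 ≤ q x)
    (hv : ContDiff ℝ 1 v) (hvpos : ∀ x, 0 < v x) (hv' : ∀ x, 0 < deriv v x)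
    (hftc : ∀ a b : ℝ, deriv v b - deriv v a = ∫ t in a..b, q t * v t)
    {x d y : ℝ} (hd0 : 0 < d) (hQ : ∫ t in (x-d)..(x+d), q t ≤ 2 / d)
    (hy1 : x - d/2 ≤ y) (hy2 : y ≤ x + d/2) :
    deriv v y * d ≤ 4 * v y := by
  have hvm : Monotone v := (strictMono_of_deriv_pos hv').monotone
  have hdm : Monotone (deriv v) := aux_deriv_mono hq hvpos hftc
  have hvc : Continuous v := hv.continuous
  have hs0 : 0 < d / 2 := by linarith
  have hys : y - d/2 ≤ y := by linarith
  have hvftc : ∫ t in (y-d/2)..y, deriv v t = v y - v (y-d/2) :=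
    intervalIntegral.integral_deriv_eq_sub (fun t _ => (hv.differentiable one_ne_zero) t)
      ((hv.continuous_deriv le_rfl).intervalIntegrable _ _)
  have h1 : d/2 * deriv v (y-d/2) ≤ v y - v (y-d/2) := by
    have hle : ∫ _t in (y-d/2)..y, deriv v (y-d/2) ≤ ∫ t in (y-d/2)..y, deriv v t :=
      intervalIntegral.integral_mono_on hys intervalIntegrable_const
        ((hv.continuous_deriv le_rfl).intervalIntegrable _ _) (fun t ht => hdm ht.1)
    rw [hvftc, intervalIntegral.integral_const, smul_eq_mul] at hle
    have : y - (y - d/2) = d/2 := by ring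
    rw [this] at hle
    exact hle
  have h1' : deriv v (y-d/2) ≤ 2 / d * v y := by
    have hp := hvpos (y-d/2)
    rw [div_mul_eq_mul_div, le_div_iff₀ hd0]
    nlinarith
  have h2 : deriv v y - deriv v (y-d/2) ≤ 2 / d * v y := by
    rw [hftc (y-d/2) y]
    have hb1 : ∫ t in (y-d/2)..y, q t * v t ≤ ∫ t in (y-d/2)..y, q t * v y :=
      intervalIntegral.integral_mono_on hys (aux_qmul_ii hq_loc hq hvc _ _)
        ((aux_q_ii hq_loc _ _).mul_const _)
        (fun t ht => mul_le_mul_of_nonneg_left (hvm ht.2) (zero_le_one.trans (hq t)))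
    have hb2 : ∫ t in (y-d/2)..y, q t * v y = (∫ t in (y-d/2)..y, q t) * v y :=
      intervalIntegral.integral_mul_const _ _
    have hb3 : ∫ t in (y-d/2)..y, q t ≤ 2 / d :=
      le_trans (aux_q_sub hq_loc hq (by linarith) hys (by linarith)) hQ
    have hvy := hvpos y
    calc ∫ t in (y-d/2)..y, q t * v t ≤ (∫ t in (y-d/2)..y, q t) * v y := by rw [← hb2]; exact hb1
      _ ≤ 2 / d * v y := mul_le_mul_of_nonneg_right hb3 hvy.le
  have hsum : deriv v y ≤ 4 / d * v y := by
    have he : 4 / d * v y = 2 / d * v y + 2 / d * v y := by ring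
    linarith [h1', h2]
  have := mul_le_mul_of_nonneg_right hsum hd0.le
  calc deriv v y * d ≤ 4 / d * v y * d := this
    _ = 4 * v y := by field_simp

private lemma aux_v_ratio {q v : ℝ → ℝ} (hq_loc : LocallyIntegrable q) (hq : ∀ x, 1 ≤ q x)
    (hv : ContDiff ℝ 1 v) (hvpos : ∀ x, 0 < v x) (hv' : ∀ x, 0 < deriv v x)
    (hftc : ∀ a b : ℝ, deriv v b - deriv v a = ∫ t in a..b, q t * v t)
    {x d : ℝ} (hd0 : 0 < d) (hQ : ∫ t in (x-d)..(x+d), q t ≤ 2 / d) :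
    v (x + d/2) ≤ Real.exp 4 * v (x - d/2) := by
  have hab : x - d/2 ≤ x + d/2 := by linarith
  have hdc : Continuous (fun t => deriv v t / v t) :=
    (hv.continuous_deriv le_rfl).div hv.continuous (fun t => (hvpos t).ne')
  have hlog : ∫ t in (x - d/2)..(x + d/2), deriv v t / v t
      = Real.log (v (x + d/2)) - Real.log (v (x - d/2)) := by
    refine intervalIntegral.integral_eq_sub_of_hasDerivAt (f := fun y => Real.log (v y)) (fun t _ => ?_)
      (hdc.intervalIntegrable _ _)
    have h1 := (Real.hasDerivAt_log (hvpos t).ne').comp t ((hv.differentiable one_ne_zero) t).hasDerivAt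
    simpa [Function.comp_def, div_eq_inv_mul] using h1
  have hbound : ∫ t in (x - d/2)..(x + d/2), deriv v t / v t
      ≤ ∫ _t in (x - d/2)..(x + d/2), 4 / d :=
    intervalIntegral.integral_mono_on hab (hdc.intervalIntegrable _ _) intervalIntegrable_const
      (fun t ht => by
        rw [div_le_div_iff₀ (hvpos t) hd0]
        have := aux_v_deriv_bound hq_loc hq hv hvpos hv' hftc hd0 hQ ht.1 ht.2
        linarith)
  have hc : ∫ _t in (x - d/2)..(x + d/2), (4 / d : ℝ) = 4 := by
    rw [intervalIntegral.integral_const, smul_eq_mul]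
    field_simp
    ring
  have hfin : Real.log (v (x + d/2)) - Real.log (v (x - d/2)) ≤ 4 := by
    rw [← hlog]; rw [hc] at hbound; exact hbound
  calc v (x + d/2) = Real.exp (Real.log (v (x + d/2))) := (Real.exp_log (hvpos _)).symm
    _ ≤ Real.exp (4 + Real.log (v (x - d/2))) := Real.exp_le_exp.2 (by linarith)
    _ = Real.exp 4 * v (x - d/2) := by rw [Real.exp_add, Real.exp_log (hvpos _)]

private lemma aux_u_deriv_bound {q u : ℝ → ℝ} (hq_loc : LocallyIntegrable q) (hq : ∀ x, 1 ≤ q x)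
    (hu : ContDiff ℝ 1 u) (hupos : ∀ x, 0 < u x) (hu' : ∀ x, deriv u x < 0)
    (hftc : ∀ a b : ℝ, deriv u b - deriv u a = ∫ t in a..b, q t * u t)
    {x d y : ℝ} (hd0 : 0 < d) (hQ : ∫ t in (x-d)..(x+d), q t ≤ 2 / d)
    (hy1 : x - d/2 ≤ y) (hy2 : y ≤ x + d/2) :
    -(deriv u y) * d ≤ 4 * u y := by
  have hum : Antitone u := (strictAnti_of_deriv_neg hu').antitone
  have hdm : Monotone (deriv u) := aux_deriv_mono hq hupos hftc
  have huc : Continuous u := hu.continuous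
  have hs0 : 0 < d / 2 := by linarith
  have hys : y ≤ y + d/2 := by linarith
  have huftc : ∫ t in y..(y+d/2), deriv u t = u (y+d/2) - u y :=
    intervalIntegral.integral_deriv_eq_sub (fun t _ => (hu.differentiable one_ne_zero) t)
      ((hu.continuous_deriv le_rfl).intervalIntegrable _ _)
  have h1 : u (y+d/2) - u y ≤ d/2 * deriv u (y+d/2) := by
    have hle : ∫ t in y..(y+d/2), deriv u t ≤ ∫ _t in y..(y+d/2), deriv u (y+d/2) :=
      intervalIntegral.integral_mono_on hys
        ((hu.continuous_deriv le_rfl).intervalIntegrable _ _) intervalIntegrable_const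
        (fun t ht => hdm ht.2)
    rw [huftc, intervalIntegral.integral_const, smul_eq_mul] at hle
    have he : y + d/2 - y = d/2 := by ring
    rw [he] at hle
    exact hle
  have h1' : -(deriv u (y+d/2)) ≤ 2 / d * u y := by
    have hp := hupos (y+d/2)
    rw [div_mul_eq_mul_div, le_div_iff₀ hd0]
    nlinarith
  have h2 : deriv u (y+d/2) - deriv u y ≤ 2 / d * u y := by
    rw [hftc y (y+d/2)]
    have hb1 : ∫ t in y..(y+d/2), q t * u t ≤ ∫ t in y..(y+d/2), q t * u y :=
      intervalIntegral.integral_mono_on hys (aux_qmul_ii hq_loc hq huc _ _)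
        ((aux_q_ii hq_loc _ _).mul_const _)
        (fun t ht => mul_le_mul_of_nonneg_left (hum ht.1) (zero_le_one.trans (hq t)))
    have hb2 : ∫ t in y..(y+d/2), q t * u y = (∫ t in y..(y+d/2), q t) * u y :=
      intervalIntegral.integral_mul_const _ _
    have hb3 : ∫ t in y..(y+d/2), q t ≤ 2 / d :=
      le_trans (aux_q_sub hq_loc hq (by linarith) hys (by linarith)) hQ
    have huy := hupos y
    calc ∫ t in y..(y+d/2), q t * u t ≤ (∫ t in y..(y+d/2), q t) * u y := by rw [← hb2]; exact hb1
      _ ≤ 2 / d * u y := mul_le_mul_of_nonneg_right hb3 huy.le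
  have hsum : -(deriv u y) ≤ 4 / d * u y := by
    have he : 4 / d * u y = 2 / d * u y + 2 / d * u y := by ring
    linarith [h1', h2]
  have := mul_le_mul_of_nonneg_right hsum hd0.le
  calc -(deriv u y) * d ≤ 4 / d * u y * d := this
    _ = 4 * u y := by field_simp

private lemma aux_u_ratio {q u : ℝ → ℝ} (hq_loc : LocallyIntegrable q) (hq : ∀ x, 1 ≤ q x)
    (hu : ContDiff ℝ 1 u) (hupos : ∀ x, 0 < u x) (hu' : ∀ x, deriv u x < 0)
    (hftc : ∀ a b : ℝ, deriv u b - deriv u a = ∫ t in a..b, q t * u t)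
    {x d : ℝ} (hd0 : 0 < d) (hQ : ∫ t in (x-d)..(x+d), q t ≤ 2 / d) :
    u (x - d/2) ≤ Real.exp 4 * u (x + d/2) := by
  have hab : x - d/2 ≤ x + d/2 := by linarith
  have hdc : Continuous (fun t => deriv u t / u t) :=
    (hu.continuous_deriv le_rfl).div hu.continuous (fun t => (hupos t).ne')
  have hlog : ∫ t in (x - d/2)..(x + d/2), deriv u t / u t
      = Real.log (u (x + d/2)) - Real.log (u (x - d/2)) := by
    refine intervalIntegral.integral_eq_sub_of_hasDerivAt (f := fun y => Real.log (u y))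
      (fun t _ => ?_) (hdc.intervalIntegrable _ _)
    have h1 := (Real.hasDerivAt_log (hupos t).ne').comp t ((hu.differentiable one_ne_zero) t).hasDerivAt
    simpa [Function.comp_def, div_eq_inv_mul] using h1
  have hbound : ∫ _t in (x - d/2)..(x + d/2), (-4) / d
      ≤ ∫ t in (x - d/2)..(x + d/2), deriv u t / u t :=
    intervalIntegral.integral_mono_on hab intervalIntegrable_const (hdc.intervalIntegrable _ _)
      (fun t ht => by
        rw [div_le_div_iff₀ hd0 (hupos t)]
        have := aux_u_deriv_bound hq_loc hq hu hupos hu' hftc hd0 hQ ht.1 ht.2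
        linarith)
  have hc : ∫ _t in (x - d/2)..(x + d/2), ((-4) / d : ℝ) = -4 := by
    rw [intervalIntegral.integral_const, smul_eq_mul]
    field_simp
    ring
  have hfin : Real.log (u (x - d/2)) ≤ 4 + Real.log (u (x + d/2)) := by
    rw [hlog] at hbound; rw [hc] at hbound; linarith
  calc u (x - d/2) = Real.exp (Real.log (u (x - d/2))) := (Real.exp_log (hupos _)).symm
    _ ≤ Real.exp (4 + Real.log (u (x + d/2))) := Real.exp_le_exp.2 hfin
    _ = Real.exp 4 * u (x + d/2) := by rw [Real.exp_add, Real.exp_log (hupos _)]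

private lemma aux_green {u v : ℝ → ℝ} (hu : Continuous u) (hv : Continuous v)
    {a b t m : ℝ} (hab : a ≤ b) (hm : ∀ s ∈ Set.Icc a b, m ≤ GreenFn u v t s) :
    m * (b - a) ≤ GreenOp u v ((Set.Icc a b).indicator fun _ => 1) t := by
  have hGc : Continuous (fun s => GreenFn u v t s) := by
    unfold GreenFn
    exact Continuous.if_le (hu.mul continuous_const) (continuous_const.mul hv)
      continuous_const continuous_id (fun s hs => by rw [← hs])
  have heq : (fun s => GreenFn u v t s * (Set.Icc a b).indicator (fun _ => (1:ℝ)) s)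
      = (Set.Icc a b).indicator (fun s => GreenFn u v t s) := by
    funext s
    by_cases hs : s ∈ Set.Icc a b
    · simp [Set.indicator_of_mem hs]
    · simp [Set.indicator_of_notMem hs]
  rw [GreenOp, heq, integral_indicator measurableSet_Icc]
  have hint : IntegrableOn (fun s => GreenFn u v t s) (Set.Icc a b) :=
    hGc.continuousOn.integrableOn_compact isCompact_Icc
  have hconst : ∫ _s in Set.Icc a b, m = m * (b - a) := by
    rw [setIntegral_const, Real.volume_real_Icc_of_le hab, smul_eq_mul]
    ring
  calc m * (b - a) = ∫ _s in Set.Icc a b, m := hconst.symm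
    _ ≤ ∫ s in Set.Icc a b, GreenFn u v t s :=
      setIntegral_mono_on (integrableOn_const measure_Icc_lt_top.ne) hint
        measurableSet_Icc hm

/-- Lemmas 5.1 and 5.2: there is an absolute constant `c > 0` such that for all `x ∈ ℝ`
and `t ∈ [x - d(x)/2, x + d(x)/2]`: `c⁻¹ v(x) ≤ v(t) ≤ c v(x)`,
`c⁻¹ u(x) ≤ u(t) ≤ c u(x)`, and `(G f_x)(t) ≥ c⁻¹ d(x)²`, where `f_x` is the
characteristic function of `Δ(x) = [x - d(x)/2, x + d(x)/2]`. -/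
theorem lemmas_5_1_and_5_2 (q u v : ℝ → ℝ) (hq_loc : LocallyIntegrable q)
    (hq : ∀ x, 1 ≤ q x) (huv : IsPFSS q u v) (d : ℝ → ℝ)
    (hd : ∀ x, 0 < d x ∧ (2 : ℝ) = d x * ∫ t in (x - d x)..(x + d x), q t) :
    ∃ c : ℝ, 0 < c ∧ ∀ x : ℝ, ∀ t ∈ Set.Icc (x - d x / 2) (x + d x / 2),
      (c⁻¹ * v x ≤ v t ∧ v t ≤ c * v x) ∧
      (c⁻¹ * u x ≤ u t ∧ u t ≤ c * u x) ∧
      c⁻¹ * d x ^ 2 ≤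
        GreenOp u v (Set.indicator (Set.Icc (x - d x / 2) (x + d x / 2)) fun _ => 1) t := by
  obtain ⟨hu, hv, hftcu, hftcv, hupos, hvpos, hu', hv', hW, hrep, -⟩ := huv
  set E : ℝ := Real.exp 4 with hE
  have hE0 : 0 < E := Real.exp_pos 4
  have hE2 : (2:ℝ) ≤ E := by
    have := Real.add_one_le_exp (4:ℝ); rw [hE]; linarith
  have hE1 : (1:ℝ) ≤ E := by linarith
  have hc20 : Real.exp 20 = E ^ 5 := by
    rw [hE, ← Real.exp_nat_mul]; norm_num
  have hE5 : E ≤ E ^ 5 := le_self_pow₀ hE1 (by norm_num)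
  have hexp20 : (0:ℝ) < Real.exp 20 := Real.exp_pos _
  refine ⟨Real.exp 20, hexp20, ?_⟩
  intro x t ht
  obtain ⟨hd0, hdq⟩ := hd x
  set D := d x with hD
  have hQ : ∫ s in (x - D)..(x + D), q s ≤ 2 / D := by
    rw [mul_comm] at hdq
    rw [le_div_iff₀ hd0]
    linarith
  have hvm : Monotone v := (strictMono_of_deriv_pos hv').monotone
  have hum : Antitone u := (strictAnti_of_deriv_neg hu').antitone
  obtain ⟨hta, htb⟩ := ht
  have hxa : x - D/2 ≤ x := by linarith
  have hxb : x ≤ x + D/2 := by linarith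
  have Rv : v (x + D/2) ≤ E * v (x - D/2) :=
    aux_v_ratio hq_loc hq hv hvpos hv' hftcv hd0 hQ
  have Ru : u (x - D/2) ≤ E * u (x + D/2) :=
    aux_u_ratio hq_loc hq hu hupos hu' hftcu hd0 hQ
  -- basic positivity
  have hvx := hvpos x; have hux := hupos x
  have hva := hvpos (x - D/2); have hvb := hvpos (x + D/2)
  have hua := hupos (x - D/2); have hub := hupos (x + D/2)
  have hvt := hvpos t; have hut := hupos t
  -- v bounds
  have hv1 : v t ≤ E * v x := by
    have h1 : v t ≤ v (x + D/2) := hvm htb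
    have h2 : v (x - D/2) ≤ v x := hvm hxa
    nlinarith
  have hv2 : v x ≤ E * v t := by
    have h1 : v x ≤ v (x + D/2) := hvm hxb
    have h2 : v (x - D/2) ≤ v t := hvm hta
    nlinarith
  have hu1 : u t ≤ E * u x := by
    have h1 : u t ≤ u (x - D/2) := hum hta
    have h2 : u (x + D/2) ≤ u x := hum hxb
    nlinarith
  have hu2 : u x ≤ E * u t := by
    have h1 : u x ≤ u (x - D/2) := hum hxa
    have h2 : u (x + D/2) ≤ u t := hum htb
    nlinarith
  have inv_bound : ∀ a b : ℝ, a ≤ Real.exp 20 * b → (Real.exp 20)⁻¹ * a ≤ b := by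
    intro a b h
    have h2 := mul_le_mul_of_nonneg_left h (inv_nonneg.2 hexp20.le)
    rwa [← mul_assoc, inv_mul_cancel₀ hexp20.ne', one_mul] at h2
  refine ⟨⟨?_, ?_⟩, ⟨?_, ?_⟩, ?_⟩
  · refine inv_bound _ _ ?_
    calc v x ≤ E * v t := hv2
      _ ≤ E ^ 5 * v t := mul_le_mul_of_nonneg_right hE5 hvt.le
      _ = Real.exp 20 * v t := by rw [hc20]
  · calc v t ≤ E * v x := hv1
      _ ≤ E ^ 5 * v x := mul_le_mul_of_nonneg_right hE5 hvx.le
      _ = Real.exp 20 * v x := by rw [hc20]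
  · refine inv_bound _ _ ?_
    calc u x ≤ E * u t := hu2
      _ ≤ E ^ 5 * u t := mul_le_mul_of_nonneg_right hE5 hut.le
      _ = Real.exp 20 * u t := by rw [hc20]
  · calc u t ≤ E * u x := hu1
      _ ≤ E ^ 5 * u x := mul_le_mul_of_nonneg_right hE5 hux.le
      _ = Real.exp 20 * u x := by rw [hc20]
  -- Green bound
  · have hm : ∀ s ∈ Set.Icc (x - D/2) (x + D/2),
        u (x + D/2) * v (x - D/2) ≤ GreenFn u v t s := by
      intro s hs
      have hvs := hvpos s; have hus := hupos s
      unfold GreenFn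
      split_ifs with hts
      · exact mul_le_mul (hum hs.2) (hvm hta) hva.le hus.le
      · exact mul_le_mul (hum htb) (hvm hs.1) hva.le hut.le
    have hG := aux_green hu.continuous hv.continuous
      (by linarith : x - D/2 ≤ x + D/2) hm
    have hba : x + D/2 - (x - D/2) = D := by ring
    rw [hba] at hG
    -- lower bound on u x * v x
    set I : ℝ := ∫ s in Set.Ioi x, ((v s) ^ 2)⁻¹ with hI_def
    have hrepx : u x = v x * I := hrep x
    have hI : IntegrableOn (fun s => ((v s) ^ 2)⁻¹) (Set.Ioi x) volume := by
      by_contra hni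
      have h0 : I = 0 := integral_undef hni
      rw [h0, mul_zero] at hrepx
      exact hux.ne' hrepx
    have hIpos : 0 < I := by
      by_contra h
      push_neg at h
      have h2 : v x * I ≤ 0 := mul_nonpos_iff.2 (Or.inl ⟨hvx.le, h⟩)
      rw [← hrepx] at h2
      linarith
    have hstep : ∫ s in Set.Ioc x (x + D/2), ((v s) ^ 2)⁻¹ ≤ I :=
      setIntegral_mono_set hI (Filter.Eventually.of_forall fun s => by positivity)
        (HasSubset.Subset.eventuallyLE Set.Ioc_subset_Ioi_self)
    have hconst : D/2 * ((v (x + D/2)) ^ 2)⁻¹ ≤ ∫ s in Set.Ioc x (x + D/2), ((v s) ^ 2)⁻¹ := by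
      have h1 : ∫ _s in Set.Ioc x (x + D/2), ((v (x + D/2)) ^ 2)⁻¹
          ≤ ∫ s in Set.Ioc x (x + D/2), ((v s) ^ 2)⁻¹ := by
        refine setIntegral_mono_on (integrableOn_const measure_Ioc_lt_top.ne)
          (hI.mono_set Set.Ioc_subset_Ioi_self) measurableSet_Ioc (fun s hs => ?_)
        have hvs := hvpos s
        have h2 : v s ≤ v (x + D/2) := hvm hs.2
        have h3 : (v s) ^ 2 ≤ (v (x + D/2)) ^ 2 := pow_le_pow_left₀ hvs.le h2 2
        exact inv_anti₀ (by positivity) h3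
      have h2 : ∫ _s in Set.Ioc x (x + D/2), ((v (x + D/2)) ^ 2)⁻¹
          = D/2 * ((v (x + D/2)) ^ 2)⁻¹ := by
        rw [setIntegral_const, Real.volume_real_Ioc_of_le (by linarith : x ≤ x + D/2), smul_eq_mul]
        ring_nf
      linarith
    have hvb2 : (0:ℝ) < (v (x + D/2)) ^ 2 := by positivity
    have hD2 : D/2 ≤ I * (v (x + D/2)) ^ 2 := by
      have h := mul_le_mul_of_nonneg_right (le_trans hconst hstep) hvb2.le
      rwa [mul_assoc, inv_mul_cancel₀ hvb2.ne', mul_one] at h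
    -- chain
    have c1 : (v (x + D/2)) ^ 2 ≤ E ^ 2 * (v x) ^ 2 := by
      have h1 : v (x + D/2) ≤ E * v x :=
        Rv.trans (mul_le_mul_of_nonneg_left (hvm hxa) hE0.le)
      calc (v (x + D/2)) ^ 2 ≤ (E * v x) ^ 2 := pow_le_pow_left₀ hvb.le h1 2
        _ = E ^ 2 * (v x) ^ 2 := by ring
    have c4 : D/2 ≤ E ^ 2 * (u x * v x) := by
      have c2 : I * (v (x + D/2)) ^ 2 ≤ I * (E ^ 2 * (v x) ^ 2) :=
        mul_le_mul_of_nonneg_left c1 hIpos.le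
      have c3 : I * (E ^ 2 * (v x) ^ 2) = E ^ 2 * (u x * v x) := by rw [hrepx]; ring
      linarith [hD2]
    have c5 : u x * v x ≤ E ^ 2 * (u (x + D/2) * v (x - D/2)) := by
      have h1 : u x ≤ E * u (x + D/2) :=
        (hum hxa).trans Ru
      have h2 : v x ≤ E * v (x - D/2) :=
        (hvm hxb).trans Rv
      calc u x * v x ≤ (E * u (x + D/2)) * (E * v (x - D/2)) :=
            mul_le_mul h1 h2 hvx.le (by positivity)
        _ = E ^ 2 * (u (x + D/2) * v (x - D/2)) := by ring
    have hkey : D ≤ E ^ 5 * (u (x + D/2) * v (x - D/2)) := by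
      have c6 : D/2 ≤ E ^ 2 * (E ^ 2 * (u (x + D/2) * v (x - D/2))) :=
        c4.trans (mul_le_mul_of_nonneg_left c5 (sq_nonneg E))
      have c6' : E ^ 2 * (E ^ 2 * (u (x + D/2) * v (x - D/2)))
          = E ^ 4 * (u (x + D/2) * v (x - D/2)) := by ring
      have h44 : 2 * E ^ 4 ≤ E ^ 5 := by
        calc 2 * E ^ 4 ≤ E * E ^ 4 :=
              mul_le_mul_of_nonneg_right hE2 (pow_pos hE0 4).le
          _ = E ^ 5 := by ring
      have h45 : 2 * (E ^ 4 * (u (x + D/2) * v (x - D/2)))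
          ≤ E ^ 5 * (u (x + D/2) * v (x - D/2)) := by
        calc 2 * (E ^ 4 * (u (x + D/2) * v (x - D/2)))
            = (2 * E ^ 4) * (u (x + D/2) * v (x - D/2)) := by ring
          _ ≤ E ^ 5 * (u (x + D/2) * v (x - D/2)) :=
              mul_le_mul_of_nonneg_right h44 (mul_pos hub hva).le
      rw [c6'] at c6
      linarith
    refine inv_bound _ _ ?_
    calc D ^ 2 = D * D := sq D
      _ ≤ (E ^ 5 * (u (x + D/2) * v (x - D/2))) * D :=
        mul_le_mul_of_nonneg_right hkey hd0.le
      _ = E ^ 5 * (u (x + D/2) * v (x - D/2) * D) := by ring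
      _ ≤ E ^ 5 * GreenOp u v ((Set.Icc (x - D/2) (x + D/2)).indicator fun _ => 1) t :=
        mul_le_mul_of_nonneg_left hG (by positivity)
      _ = Real.exp 20 * GreenOp u v ((Set.Icc (x - D/2) (x + D/2)).indicator fun _ => 1) t := by
        rw [hc20]
end
end
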